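/- Let (λ_j)_{j≥1} be a nondecreasing sequence of positive reals tending to infinity with counting function N(λ) = #{j : λ_j < λ}, and suppose Σ_{j≥1}(λ − λ_j)₊ = A·λ(log λ)² + O(λ log λ) as λ → ∞ for some constant A > 0. Then lim_{λ→∞} N(λ)/(log λ)² = A. -/

import Mathlib

open Filter

theorem weyl_law_from_riesz_mean (lam : ℕ → ℝ) (hmono : Monotone lam)
    (hpos : ∀ j, 0 < lam j) (htend : Tendsto lam atTop atTop)
    (A : ℝ) (hA : 0 < A)
    (hriesz : ∃ C Λ : ℝ, 0 < C ∧ 0 < Λ ∧ ∀ l : ℝ, Λ ≤ l →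
      |(∑' j, max (l - lam j) 0) - A * l * (Real.log l)^2| ≤ C * l * Real.log l) :
    Tendsto (fun l : ℝ => (Set.ncard {j : ℕ | lam j < l} : ℝ) / (Real.log l)^2)
      atTop (nhds A) := by
  obtain ⟨C, Λ, hC, hΛ, hb⟩ := hriesz
  -- finiteness of the counting sets
  have hfin : ∀ l : ℝ, {j : ℕ | lam j < l}.Finite := by
    intro l
    obtain ⟨n, hn⟩ := eventually_atTop.mp (htend.eventually (eventually_ge_atTop l))
    apply Set.Finite.subset (Set.finite_Iio n)
    intro j hj
    simp only [Set.mem_setOf_eq] at hj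
    by_contra h
    exact absurd (hn j (le_of_not_gt h)) (not_le.mpr hj)
  -- summability
  have hsum : ∀ l : ℝ, Summable (fun j => max (l - lam j) 0) := by
    intro l
    apply summable_of_ne_finset_zero (s := (hfin l).toFinset)
    intro j hj
    rw [Set.Finite.mem_toFinset] at hj
    simp only [Set.mem_setOf_eq, not_lt] at hj
    exact max_eq_right (by linarith)
  have hcard : ∀ l : ℝ, (Set.ncard {j : ℕ | lam j < l} : ℝ)
      = (((hfin l).toFinset.card : ℕ) : ℝ) := by
    intro l
    rw [Set.ncard_eq_toFinset_card _ (hfin l)]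
  -- upper bound for the Riesz mean by l * N(l)
  have hup : ∀ l : ℝ, 0 ≤ l →
      (∑' j, max (l - lam j) 0) ≤ l * (((hfin l).toFinset.card : ℕ) : ℝ) := by
    intro l hl
    have heq : (∑' j, max (l - lam j) 0)
        = ∑ j ∈ (hfin l).toFinset, max (l - lam j) 0 := by
      apply tsum_eq_sum
      intro j hj
      rw [Set.Finite.mem_toFinset] at hj
      simp only [Set.mem_setOf_eq, not_lt] at hj
      exact max_eq_right (by linarith)
    rw [heq]
    calc ∑ j ∈ (hfin l).toFinset, max (l - lam j) 0
        ≤ ∑ _j ∈ (hfin l).toFinset, l := by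
          apply Finset.sum_le_sum
          intro j _
          exact max_le (by linarith [hpos j]) hl
      _ = l * (((hfin l).toFinset.card : ℕ) : ℝ) := by
          rw [Finset.sum_const, nsmul_eq_mul, mul_comm]
  -- lower bound : l * N(l) ≤ R(2l) - R(l)
  have hlow : ∀ l : ℝ, 0 ≤ l →
      l * (((hfin l).toFinset.card : ℕ) : ℝ)
        ≤ (∑' j, max (2*l - lam j) 0) - (∑' j, max (l - lam j) 0) := by
    intro l hl
    have h1 := hsum l
    have h2 := hsum (2*l)
    rw [← Summable.tsum_sub h2 h1]
    have hnn : ∀ j, 0 ≤ max (2*l - lam j) 0 - max (l - lam j) 0 := by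
      intro j
      have : max (l - lam j) 0 ≤ max (2*l - lam j) 0 :=
        max_le_max (by linarith) le_rfl
      linarith
    have hs : ∑ j ∈ (hfin l).toFinset,
        (max (2*l - lam j) 0 - max (l - lam j) 0) ≤
        ∑' j, (max (2*l - lam j) 0 - max (l - lam j) 0) :=
      Summable.sum_le_tsum _ (fun j _ => hnn j) (h2.sub h1)
    refine le_trans ?_ hs
    have hterm : ∀ j ∈ (hfin l).toFinset,
        max (2*l - lam j) 0 - max (l - lam j) 0 = l := by
      intro j hj
      rw [Set.Finite.mem_toFinset] at hj
      simp only [Set.mem_setOf_eq] at hj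
      rw [max_eq_left (by linarith), max_eq_left (by linarith)]
      ring
    rw [Finset.sum_congr rfl hterm, Finset.sum_const, nsmul_eq_mul, mul_comm]
  -- squeeze
  have hsq_lo : Tendsto (fun l : ℝ => A - C / Real.log l) atTop (nhds A) := by
    have : Tendsto (fun l : ℝ => C / Real.log l) atTop (nhds 0) :=
      Tendsto.div_atTop tendsto_const_nhds Real.tendsto_log_atTop
    simpa using tendsto_const_nhds.sub this
  have hsq_hi : Tendsto (fun l : ℝ => A + (6*A + 5*C) / Real.log l) atTop (nhds A) := by
    have : Tendsto (fun l : ℝ => (6*A + 5*C) / Real.log l) atTop (nhds 0) :=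
      Tendsto.div_atTop tendsto_const_nhds Real.tendsto_log_atTop
    simpa using tendsto_const_nhds.add this
  apply tendsto_of_tendsto_of_tendsto_of_le_of_le' hsq_lo hsq_hi
  · -- lower bound eventually
    filter_upwards [eventually_ge_atTop (max Λ 3)] with l hl
    have hl3 : (3:ℝ) ≤ l := le_trans (le_max_right _ _) hl
    have hlΛ : Λ ≤ l := le_trans (le_max_left _ _) hl
    have hl0 : (0:ℝ) < l := by linarith
    have hL1 : (1:ℝ) ≤ Real.log l := by
      rw [Real.le_log_iff_exp_le hl0]
      have := Real.exp_one_lt_d9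
      linarith
    have hL0 : (0:ℝ) < Real.log l := by linarith
    have habs := (abs_le.mp (hb l hlΛ)).1
    have hNl : A * (Real.log l)^2 - C * Real.log l
        ≤ (((hfin l).toFinset.card : ℕ) : ℝ) := by
      have h2 := hup l hl0.le
      have h3 : l * (A * (Real.log l)^2 - C * Real.log l)
          ≤ l * (((hfin l).toFinset.card : ℕ) : ℝ) := by
        nlinarith [habs, h2]
      exact le_of_mul_le_mul_left h3 hl0
    rw [hcard l, le_div_iff₀ (by positivity : (0:ℝ) < (Real.log l)^2)]
    have hexp : (A - C / Real.log l) * (Real.log l)^2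
        = A * (Real.log l)^2 - C * Real.log l := by
      field_simp
    linarith [hexp, hNl]
  · -- upper bound eventually
    filter_upwards [eventually_ge_atTop (max Λ 3)] with l hl
    have hl3 : (3:ℝ) ≤ l := le_trans (le_max_right _ _) hl
    have hlΛ : Λ ≤ l := le_trans (le_max_left _ _) hl
    have hlΛ2 : Λ ≤ 2*l := by linarith
    have hl0 : (0:ℝ) < l := by linarith
    have hL1 : (1:ℝ) ≤ Real.log l := by
      rw [Real.le_log_iff_exp_le hl0]
      have := Real.exp_one_lt_d9
      linarith
    have hL0 : (0:ℝ) < Real.log l := by linarith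
    have hu0 : (0:ℝ) ≤ Real.log 2 := Real.log_nonneg (by norm_num)
    have hu1 : Real.log 2 ≤ 1 := by
      have := Real.log_two_lt_d9
      linarith
    have hlog2l : Real.log (2*l) = Real.log 2 + Real.log l :=
      Real.log_mul (by norm_num) (ne_of_gt hl0)
    have habs1 := (abs_le.mp (hb l hlΛ)).1
    have habs2 := (abs_le.mp (hb (2*l) hlΛ2)).2
    rw [hlog2l] at habs2
    have key := hlow l hl0.le
    -- core scalar inequality
    have haul : A * Real.log 2 * Real.log l ≤ A * Real.log l :=
      mul_le_mul_of_nonneg_right (mul_le_of_le_one_right hA.le hu1) hL0.le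
    have hau2 : A * (Real.log 2)^2 ≤ A * Real.log l := by
      have h : (Real.log 2)^2 ≤ Real.log l := by nlinarith
      exact mul_le_mul_of_nonneg_left h hA.le
    have hcu : C * Real.log 2 ≤ C * Real.log l :=
      mul_le_mul_of_nonneg_left (hu1.trans hL1) hC.le
    have hcore : A * 2 * (Real.log 2 + Real.log l)^2 + C * 2 * (Real.log 2 + Real.log l)
        - (A * (Real.log l)^2 - C * Real.log l)
        ≤ A * (Real.log l)^2 + (6*A + 5*C) * Real.log l := by nlinarith
    have hNl : (((hfin l).toFinset.card : ℕ) : ℝ)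
        ≤ A * (Real.log l)^2 + (6*A + 5*C) * Real.log l := by
      have h3 : l * (((hfin l).toFinset.card : ℕ) : ℝ)
          ≤ l * (A * (Real.log l)^2 + (6*A + 5*C) * Real.log l) := by
        have e1 : A * (2*l) * (Real.log 2 + Real.log l)^2
            + C * (2*l) * (Real.log 2 + Real.log l)
            - (A * l * (Real.log l)^2 - C * l * Real.log l)
            = l * (A * 2 * (Real.log 2 + Real.log l)^2
              + C * 2 * (Real.log 2 + Real.log l)
              - (A * (Real.log l)^2 - C * Real.log l)) := by ring
        have e2 := mul_le_mul_of_nonneg_left hcore hl0.le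
        nlinarith [key, habs1, habs2]
      exact le_of_mul_le_mul_left h3 hl0
    rw [hcard l, div_le_iff₀ (by positivity : (0:ℝ) < (Real.log l)^2)]
    have hexp : (A + (6*A + 5*C) / Real.log l) * (Real.log l)^2
        = A * (Real.log l)^2 + (6*A + 5*C) * Real.log l := by
      field_simp
    linarith [hexp, hNl]
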